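/- arXiv:2402.08317 — 2 statements merged into one kernel-verified Lean document; each statement's English description precedes it below -/
import Mathlib

section
/- For every φ, ψ ∈ ℓ², the weak resolution of identity holds: ⟨ψ, φ⟩ = (1/π) ∫_ℂ ⟨ψ|α⟩⟨α|φ⟩ d²α, where |α⟩ is the coherent state and the integral is over the whole complex plane with Lebesgue measure. -/
open MeasureTheory Real Set Filter
open scoped InnerProductSpace ENNReal


lemma ang_zero {k : ℤ} (hk : (k : ℂ) ≠ 0) :
    ∫ θ : ℝ in Ioo (-π) π, Complex.exp (k * θ * Complex.I) = 0 := by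
  have h1 : ∀ θ : ℝ, Complex.exp ((k : ℂ) * θ * Complex.I) =
      Complex.exp (((k : ℂ) * Complex.I) * θ) := by
    intro θ; ring_nf
  simp_rw [h1]
  rw [← integral_Ioc_eq_integral_Ioo,
    ← intervalIntegral.integral_of_le (by linarith [Real.pi_pos] : -π ≤ π)]
  rw [integral_exp_mul_complex (by simp [hk, Complex.I_ne_zero])]
  have : Complex.exp ((k : ℂ) * Complex.I * π) = Complex.exp ((k : ℂ) * Complex.I * (-π : ℝ)) := by
    rw [Complex.exp_eq_exp_iff_exists_int]
    refine ⟨k, ?_⟩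
    push_cast
    ring
  rw [this, sub_self, zero_div]


lemma radial_eval (k : ℕ) :
    ∫ r : ℝ in Ioi 0, r ^ (k + 1) * rexp (-r ^ 2) = (1 / 2) * Real.Gamma ((k + 2) / 2) := by
  rw [show ∫ r : ℝ in Ioi 0, r ^ (k + 1) * rexp (-r ^ 2)
      = ∫ r : ℝ in Ioi 0, r ^ ((k + 1 : ℕ) : ℝ) * rexp (-r ^ (2 : ℝ)) from
    setIntegral_congr_fun measurableSet_Ioi (fun r hr => by
      rw [Real.rpow_natCast, Real.rpow_two, sq])]
  rw [integral_rpow_mul_exp_neg_rpow (by norm_num) (by push_cast; linarith [Nat.cast_nonneg (α := ℝ) k])]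
  norm_num
  ring_nf

lemma J_eval (n m : ℕ) :
    ∫ α : ℂ, (rexp (-‖α‖ ^ 2) : ℂ) * α ^ n * (starRingEnd ℂ α) ^ m
      = if n = m then (π : ℂ) * n.factorial else 0 := by
  rw [← Complex.integral_comp_polarCoord_symm]
  have hcongr : ∀ p ∈ polarCoord.target,
      p.1 • ((rexp (-‖Complex.polarCoord.symm p‖ ^ 2) : ℂ) *
        (Complex.polarCoord.symm p) ^ n * (starRingEnd ℂ (Complex.polarCoord.symm p)) ^ m)
      = (fun r : ℝ => ((r ^ (n + m + 1) * rexp (-r ^ 2) : ℝ) : ℂ)) p.1 *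
        (fun θ : ℝ => Complex.exp ((Int.cast ((n : ℤ) - (m : ℤ)) : ℂ) * θ * Complex.I)) p.2 := by
    rintro ⟨r, θ⟩ ⟨hr, hθ⟩
    simp only [mem_Ioi] at hr
    have hz : Complex.polarCoord.symm (r, θ) = (r : ℂ) * Complex.exp (θ * Complex.I) := by
      rw [Complex.polarCoord_symm_apply, Complex.exp_mul_I]
      push_cast
      rfl
    have habs : ‖Complex.polarCoord.symm (r, θ)‖ = r := by
      rw [Complex.norm_polarCoord_symm]
      exact abs_of_pos hr
    have hconj : (starRingEnd ℂ) (Complex.polarCoord.symm (r, θ))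
        = (r : ℂ) * Complex.exp (-(θ : ℂ) * Complex.I) := by
      rw [hz, map_mul, Complex.conj_ofReal, ← Complex.exp_conj, map_mul, Complex.conj_I,
        Complex.conj_ofReal]
      ring_nf
    rw [habs, hconj, hz]
    simp only [Complex.real_smul, mul_pow, ← Complex.exp_nat_mul]
    rw [show ((n : ℂ) * ((θ : ℂ) * Complex.I)) = (n * θ * Complex.I : ℂ) from by ring,
      show ((m : ℂ) * (-(θ : ℂ) * Complex.I)) = (-(m * θ) * Complex.I : ℂ) from by ring]
    rw [show (Int.cast ((n : ℤ) - (m : ℤ)) : ℂ) * θ * Complex.I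
        = (n * θ * Complex.I : ℂ) + (-((m : ℂ) * θ) * Complex.I) from by push_cast; ring,
      Complex.exp_add]
    push_cast
    ring
  rw [setIntegral_congr_fun polarCoord.open_target.measurableSet hcongr]
  rw [show polarCoord.target = Ioi (0:ℝ) ×ˢ Ioo (-π) π from rfl, Measure.volume_eq_prod,
    setIntegral_prod_mul (fun r : ℝ => ((r ^ (n + m + 1) * rexp (-r ^ 2) : ℝ) : ℂ))
      (fun θ : ℝ => Complex.exp ((Int.cast ((n : ℤ) - (m : ℤ)) : ℂ) * θ * Complex.I))]
  have hR : (∫ x : ℝ in Ioi 0, ((x ^ (n + m + 1) * rexp (-x ^ 2) : ℝ) : ℂ))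
      = (((1 / 2) * Real.Gamma (((n + m : ℕ) + 2) / 2) : ℝ) : ℂ) := by
    rw [← radial_eval (n + m)]
    exact integral_ofReal
  rw [hR]
  by_cases h : n = m
  · subst h
    simp only [sub_self, Int.cast_zero, zero_mul, Complex.exp_zero, if_pos rfl]
    rw [setIntegral_const]
    rw [measureReal_def, Real.volume_Ioo]
    have h2 : π - -π = 2 * π := by ring
    rw [h2, ENNReal.toReal_ofReal (by positivity)]
    have hΓ : ((n + n : ℕ) + 2 : ℝ) / 2 = (n + 1 : ℝ) := by push_cast; ring
    rw [hΓ]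
    have := Real.Gamma_nat_eq_factorial n
    push_cast [this, Complex.real_smul]
    ring
  · rw [ang_zero (k := (n : ℤ) - (m : ℤ)) (by
      simp only [Int.cast_sub, Int.cast_natCast, sub_ne_zero]
      exact_mod_cast fun hh => h (Nat.cast_injective hh)), mul_zero, if_neg h]

lemma integrable_aux (k : ℕ) :
    Integrable (fun α : ℂ => ‖α‖ ^ k * rexp (-‖α‖ ^ 2)) := by
  have hfin : ((Module.finrank ℝ ℂ : ℕ) : ℝ) < 3 := by
    rw [Complex.finrank_real_complex]; norm_num
  have hint := (integrable_one_add_norm (E := ℂ) (μ := volume) hfin).const_mul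
    (rexp (((k : ℝ) + 3) ^ 2 / 4))
  refine hint.mono' ?_ (ae_of_all _ fun α => ?_)
  · exact ((continuous_norm.pow k).mul
      (((continuous_norm.pow 2).neg).rexp)).aestronglyMeasurable
  · set t := ‖α‖ with ht
    have ht0 : 0 ≤ t := norm_nonneg α
    have h1t : (0:ℝ) < 1 + t := by linarith
    rw [Real.norm_of_nonneg (by positivity)]
    have key : t ^ k * rexp (-t ^ 2) * (1 + t) ^ (3:ℕ) ≤ rexp (((k : ℝ) + 3) ^ 2 / 4) := by
      have h2 : t ^ k ≤ (1 + t) ^ k := pow_le_pow_left₀ ht0 (by linarith) k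
      have h3 : (1 + t) ^ (k + 3) ≤ rexp (t * (k + 3)) := by
        calc (1 + t) ^ (k + 3) ≤ (rexp t) ^ (k + 3) :=
              pow_le_pow_left₀ (by positivity) (by linarith [Real.add_one_le_exp t]) _
          _ = rexp (t * (k + 3)) := by
              rw [← Real.exp_nat_mul]; congr 1; push_cast; ring
      have h4 : t ^ k * (1 + t) ^ (3:ℕ) ≤ (1 + t) ^ (k + 3) := by
        rw [pow_add]
        exact mul_le_mul_of_nonneg_right h2 (by positivity)
      have h5 : rexp (t * (k + 3)) * rexp (-t ^ 2) ≤ rexp (((k : ℝ) + 3) ^ 2 / 4) := by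
        rw [← Real.exp_add]
        apply Real.exp_le_exp.mpr
        nlinarith [sq_nonneg (t - ((k : ℝ) + 3) / 2)]
      calc t ^ k * rexp (-t ^ 2) * (1 + t) ^ (3:ℕ)
          = t ^ k * (1 + t) ^ (3:ℕ) * rexp (-t ^ 2) := by ring
        _ ≤ (1 + t) ^ (k + 3) * rexp (-t ^ 2) :=
            mul_le_mul_of_nonneg_right h4 (Real.exp_nonneg _)
        _ ≤ rexp (t * (k + 3)) * rexp (-t ^ 2) :=
            mul_le_mul_of_nonneg_right h3 (Real.exp_nonneg _)
        _ ≤ _ := h5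
    have hnorm : ‖α‖ = t := rfl
    have hpow : (1 + t) ^ (-(3:ℝ)) = ((1 + t) ^ (3:ℕ))⁻¹ := by
      rw [show ((3:ℝ)) = ((3:ℕ):ℝ) by norm_num, Real.rpow_neg h1t.le, Real.rpow_natCast]
    rw [mul_comm (rexp _), hpow, inv_mul_eq_div, le_div_iff₀ (by positivity)]
    exact key

noncomputable def trunc (χ : lp (fun _ : ℕ => ℂ) 2) (N : ℕ) : lp (fun _ : ℕ => ℂ) 2 :=
  ∑ i ∈ Finset.range N, lp.single 2 i (χ i)

lemma tendsto_trunc (χ : lp (fun _ : ℕ => ℂ) 2) :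
    Filter.Tendsto (fun N => trunc χ N) Filter.atTop (nhds χ) :=
  (lp.hasSum_single (E := fun _ : ℕ => ℂ) (by norm_num) χ).tendsto_sum_nat

lemma trunc_apply (χ : lp (fun _ : ℕ => ℂ) 2) (N : ℕ) (j : ℕ) :
    (trunc χ N) j = if j < N then χ j else 0 := by
  rw [trunc]
  rw [lp.coeFn_sum, Finset.sum_apply]
  simp only [lp.single_apply, Pi.single_apply, Finset.sum_ite_eq, Finset.sum_dite_eq, Finset.mem_range]


section coherent

variable (coh : ℂ → lp (fun _ : ℕ => ℂ) 2)
  (hcoh : ∀ (α : ℂ) (n : ℕ),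
      coh α n = (Real.exp (-‖α‖ ^ 2 / 2) : ℂ) * α ^ n / (Real.sqrt n.factorial : ℂ))
include hcoh

lemma coh_cont (n : ℕ) : Continuous fun α : ℂ => (coh α n : ℂ) := by
  have : (fun α : ℂ => (coh α n : ℂ))
      = fun α : ℂ => (Real.exp (-‖α‖ ^ 2 / 2) : ℂ) * α ^ n
        / (Real.sqrt n.factorial : ℂ) := funext fun α => hcoh α n
  rw [this]
  apply Continuous.div_const
  exact (Complex.continuous_ofReal.comp
    ((continuous_norm.pow 2).neg.div_const 2).rexp).mul (continuous_pow n)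

lemma coh_norm (α : ℂ) (n : ℕ) :
    ‖(coh α n : ℂ)‖ = rexp (-‖α‖ ^ 2 / 2) * ‖α‖ ^ n
      / Real.sqrt n.factorial := by
  rw [hcoh]
  rw [norm_div, norm_mul, norm_pow]
  simp only [Complex.norm_real, Real.norm_eq_abs, Real.abs_exp,
    abs_of_nonneg (Real.sqrt_nonneg _)]

lemma prod_rewrite (n m : ℕ) :
    (fun α : ℂ => (coh α n : ℂ) * (starRingEnd ℂ) (coh α m))
      = fun α : ℂ => ((1 / (Real.sqrt n.factorial * Real.sqrt m.factorial) : ℝ) : ℂ) *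
        ((rexp (-‖α‖ ^ 2) : ℂ) * α ^ n * (starRingEnd ℂ α) ^ m) := by
  funext α
  rw [hcoh α n, hcoh α m]
  simp only [map_div₀, map_mul, map_pow, Complex.conj_ofReal]
  have he : (rexp (-‖α‖ ^ 2 / 2) : ℂ) * (rexp (-‖α‖ ^ 2 / 2) : ℂ)
      = (rexp (-‖α‖ ^ 2) : ℂ) := by
    rw [← Complex.ofReal_mul, ← Real.exp_add]
    norm_num
  have hnr : (0:ℝ) < n.factorial := by exact_mod_cast n.factorial_pos
  have hmr : (0:ℝ) < m.factorial := by exact_mod_cast m.factorial_pos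
  have hn : ((Real.sqrt n.factorial : ℝ) : ℂ) ≠ 0 :=
    Complex.ofReal_ne_zero.mpr (Real.sqrt_ne_zero'.mpr hnr)
  have hm : ((Real.sqrt m.factorial : ℝ) : ℂ) ≠ 0 :=
    Complex.ofReal_ne_zero.mpr (Real.sqrt_ne_zero'.mpr hmr)
  field_simp
  have he' : (rexp (-(‖α‖ ^ 2 / 2)) : ℂ) ^ 2 = (rexp (-‖α‖ ^ 2) : ℂ) := by
    rw [sq, ← Complex.ofReal_mul, ← Real.exp_add]; congr 2; ring
  have hab : ((Real.sqrt n.factorial : ℝ) : ℂ) * ((Real.sqrt m.factorial : ℝ) : ℂ) *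
      (1 / (((Real.sqrt n.factorial : ℝ) : ℂ) * ((Real.sqrt m.factorial : ℝ) : ℂ))) = 1 :=
    mul_one_div_cancel (mul_ne_zero hn hm)
  rw [he', Complex.ofReal_div, Complex.ofReal_one, Complex.ofReal_mul]
  linear_combination (-(α ^ n * (starRingEnd ℂ) α ^ m * (rexp (-‖α‖ ^ 2) : ℂ))) * hab

lemma K_int (n m : ℕ) :
    Integrable (fun α : ℂ => (coh α n : ℂ) * (starRingEnd ℂ) (coh α m)) := by
  refine (integrable_aux (n + m)).mono' ?_ (ae_of_all _ fun α => ?_)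
  · exact ((coh_cont coh hcoh n).mul
      ((Complex.continuous_conj).comp (coh_cont coh hcoh m))).aestronglyMeasurable
  · rw [norm_mul, RCLike.norm_conj, coh_norm coh hcoh, coh_norm coh hcoh]
    have h1 : (1:ℝ) ≤ Real.sqrt n.factorial := by
      rw [show (1:ℝ) = Real.sqrt 1 by simp]
      exact Real.sqrt_le_sqrt (by exact_mod_cast Nat.one_le_iff_ne_zero.mpr n.factorial_ne_zero)
    have h2 : (1:ℝ) ≤ Real.sqrt m.factorial := by
      rw [show (1:ℝ) = Real.sqrt 1 by simp]
      exact Real.sqrt_le_sqrt (by exact_mod_cast Nat.one_le_iff_ne_zero.mpr m.factorial_ne_zero)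
    have hx := norm_nonneg α
    calc rexp (-‖α‖ ^ 2 / 2) * ‖α‖ ^ n / Real.sqrt n.factorial *
          (rexp (-‖α‖ ^ 2 / 2) * ‖α‖ ^ m / Real.sqrt m.factorial)
        ≤ rexp (-‖α‖ ^ 2 / 2) * ‖α‖ ^ n *
          (rexp (-‖α‖ ^ 2 / 2) * ‖α‖ ^ m) := by
          apply mul_le_mul
          · exact div_le_self (by positivity) h1
          · exact div_le_self (by positivity) h2
          · positivity
          · positivity
      _ = ‖α‖ ^ (n + m) * (rexp (-‖α‖ ^ 2 / 2) * rexp (-‖α‖ ^ 2 / 2)) := by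
          rw [pow_add]; ring
      _ = ‖α‖ ^ (n + m) * rexp (-‖α‖ ^ 2) := by
          rw [← Real.exp_add]; norm_num

lemma K_eval (n m : ℕ) :
    ∫ α : ℂ, (coh α n : ℂ) * (starRingEnd ℂ) (coh α m)
      = if n = m then (π : ℂ) else 0 := by
  rw [prod_rewrite coh hcoh n m, integral_const_mul, J_eval]
  by_cases h : n = m
  · subst h
    rw [if_pos rfl, if_pos rfl]
    have hs : Real.sqrt n.factorial * Real.sqrt n.factorial = (n.factorial : ℝ) :=
      Real.mul_self_sqrt (Nat.cast_nonneg _)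
    rw [hs]
    have : ((n.factorial : ℝ) : ℂ) ≠ 0 := by
      exact_mod_cast Nat.cast_ne_zero.mpr n.factorial_ne_zero
    push_cast at this ⊢
    field_simp
  · rw [if_neg h, if_neg h, mul_zero]


lemma meas_G (χ : lp (fun _ : ℕ => ℂ) 2) :
    Measurable fun α : ℂ => (⟪coh α, χ⟫_ℂ : ℂ) := by
  have hc : ∀ n, Continuous fun α : ℂ => (coh α n : ℂ) := fun n => coh_cont coh hcoh n
  apply measurable_of_tendsto_metrizable
    (f := fun N => fun α : ℂ => ∑ n ∈ Finset.range N, (starRingEnd ℂ) (coh α n) * χ n)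
  · intro N
    exact Finset.measurable_sum _ fun n _ =>
      ((Complex.continuous_conj.comp (hc n)).measurable).mul_const _
  · rw [tendsto_pi_nhds]
    intro α
    have := (lp.hasSum_inner (𝕜 := ℂ) (coh α) χ).tendsto_sum_nat
    simpa [RCLike.inner_apply', mul_comm] using this

omit hcoh in
lemma inner_coh_trunc (χ : lp (fun _ : ℕ => ℂ) 2) (N : ℕ) (α : ℂ) :
    ⟪coh α, trunc χ N⟫_ℂ = ∑ n ∈ Finset.range N, (starRingEnd ℂ) (coh α n) * χ n := by
  rw [trunc, inner_sum]
  exact Finset.sum_congr rfl fun n _ => by rw [lp.inner_single_right]; exact RCLike.inner_apply' _ _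

omit hcoh in
lemma trunc_inner_coh (χ : lp (fun _ : ℕ => ℂ) 2) (N : ℕ) (α : ℂ) :
    ⟪trunc χ N, coh α⟫_ℂ = ∑ n ∈ Finset.range N, (starRingEnd ℂ) (χ n) * coh α n := by
  rw [trunc, sum_inner]
  exact Finset.sum_congr rfl fun n _ => by rw [lp.inner_single_left]; exact RCLike.inner_apply' _ _

omit hcoh in
lemma inner_trunc_trunc (ψ φ : lp (fun _ : ℕ => ℂ) 2) (N : ℕ) :
    ⟪trunc ψ N, trunc φ N⟫_ℂ = ∑ n ∈ Finset.range N, (starRingEnd ℂ) (ψ n) * φ n := by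
  rw [show ⟪trunc ψ N, trunc φ N⟫_ℂ = ∑ n ∈ Finset.range N, ⟪lp.single 2 n (ψ n : ℂ), trunc φ N⟫_ℂ
    from by rw [← sum_inner]; rfl]
  refine Finset.sum_congr rfl fun n hn => ?_
  rw [lp.inner_single_left, trunc_apply, if_pos (Finset.mem_range.mp hn)]
  exact RCLike.inner_apply' _ _


omit hcoh in
lemma prod_expand (ψ φ : lp (fun _ : ℕ => ℂ) 2) (N : ℕ) (α : ℂ) :
    ⟪trunc ψ N, coh α⟫_ℂ * ⟪coh α, trunc φ N⟫_ℂ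
      = ∑ n ∈ Finset.range N, ∑ m ∈ Finset.range N,
          ((starRingEnd ℂ) (ψ n) * φ m) * ((coh α n : ℂ) * (starRingEnd ℂ) (coh α m)) := by
  rw [trunc_inner_coh coh ψ N α, inner_coh_trunc coh φ N α, Finset.sum_mul_sum]
  exact Finset.sum_congr rfl fun n _ => Finset.sum_congr rfl fun m _ => by ring

lemma integrable_trunc_prod (ψ φ : lp (fun _ : ℕ => ℂ) 2) (N : ℕ) :
    Integrable (fun α : ℂ => ⟪trunc ψ N, coh α⟫_ℂ * ⟪coh α, trunc φ N⟫_ℂ) := by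
  simp_rw [prod_expand coh ψ φ N]
  refine integrable_finset_sum _ fun n _ => integrable_finset_sum _ fun m _ => ?_
  exact (K_int coh hcoh n m).const_mul _

lemma trunc_integral (ψ φ : lp (fun _ : ℕ => ℂ) 2) (N : ℕ) :
    ∫ α : ℂ, ⟪trunc ψ N, coh α⟫_ℂ * ⟪coh α, trunc φ N⟫_ℂ
      = π * ⟪trunc ψ N, trunc φ N⟫_ℂ := by
  simp_rw [prod_expand coh ψ φ N]
  rw [integral_finset_sum _ fun n _ =>
    integrable_finset_sum _ fun m _ => (K_int coh hcoh n m).const_mul _]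
  have : ∀ n ∈ Finset.range N,
      ∫ α : ℂ, ∑ m ∈ Finset.range N,
          ((starRingEnd ℂ) (ψ n) * φ m) * ((coh α n : ℂ) * (starRingEnd ℂ) (coh α m))
      = ∑ m ∈ Finset.range N,
          ((starRingEnd ℂ) (ψ n) * φ m) * (if n = m then (π : ℂ) else 0) := by
    intro n _
    rw [integral_finset_sum _ fun m _ => (K_int coh hcoh n m).const_mul _]
    exact Finset.sum_congr rfl fun m _ => by rw [integral_const_mul, K_eval coh hcoh n m]
  rw [Finset.sum_congr rfl this, inner_trunc_trunc, Finset.mul_sum]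
  refine Finset.sum_congr rfl fun n hn => ?_
  rw [Finset.sum_eq_single n]
  · rw [if_pos rfl]; ring
  · intro m _ hm; rw [if_neg fun h => hm h.symm, mul_zero]
  · intro h; exact absurd hn h

-- conj z * z = ↑(‖z‖^2)
omit hcoh in
lemma conj_mul_self (z : ℂ) : (starRingEnd ℂ) z * z = ((‖z‖ ^ 2 : ℝ) : ℂ) := by
  rw [mul_comm, Complex.mul_conj, Complex.normSq_eq_norm_sq]

omit hcoh in
lemma inner_coh_mul (χ : lp (fun _ : ℕ => ℂ) 2) (α : ℂ) :
    ⟪χ, coh α⟫_ℂ * ⟪coh α, χ⟫_ℂ = ((‖⟪coh α, χ⟫_ℂ‖ ^ 2 : ℝ) : ℂ) := by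
  rw [← inner_conj_symm, conj_mul_self]

lemma diag_trunc_eq (χ : lp (fun _ : ℕ => ℂ) 2) (N : ℕ) :
    ∫ α : ℂ, ‖⟪coh α, trunc χ N⟫_ℂ‖ ^ 2 = π * ‖trunc χ N‖ ^ 2 := by
  have h := trunc_integral coh hcoh χ χ N
  simp_rw [inner_coh_mul] at h
  have h2 : ((∫ α : ℂ, ‖⟪coh α, trunc χ N⟫_ℂ‖ ^ 2 : ℝ) : ℂ)
      = (π : ℂ) * ⟪trunc χ N, trunc χ N⟫_ℂ := by
    rw [← h]; exact integral_ofReal.symm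
  rw [inner_self_eq_norm_sq_to_K (𝕜 := ℂ)] at h2
  have h3 : ((∫ α : ℂ, ‖⟪coh α, trunc χ N⟫_ℂ‖ ^ 2 : ℝ) : ℂ) = ((π * ‖trunc χ N‖ ^ 2 : ℝ) : ℂ) := by
    rw [h2]; norm_num
  exact_mod_cast h3

lemma integrable_diag_trunc (χ : lp (fun _ : ℕ => ℂ) 2) (N : ℕ) :
    Integrable (fun α : ℂ => ‖⟪coh α, trunc χ N⟫_ℂ‖ ^ 2) := by
  have h : (fun α : ℂ => ‖⟪coh α, trunc χ N⟫_ℂ‖ ^ 2)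
      = fun α : ℂ => (⟪trunc χ N, coh α⟫_ℂ * ⟪coh α, trunc χ N⟫_ℂ).re := by
    funext α
    rw [inner_coh_mul, Complex.ofReal_re]
  rw [h]
  exact (integrable_trunc_prod coh hcoh χ χ N).re

lemma diag_lintegral_le (χ : lp (fun _ : ℕ => ℂ) 2) :
    ∫⁻ α : ℂ, ENNReal.ofReal (‖⟪coh α, χ⟫_ℂ‖ ^ 2) ≤ ENNReal.ofReal (π * ‖χ‖ ^ 2) := by
  have hpt : ∀ α : ℂ, Tendsto (fun N => ENNReal.ofReal (‖⟪coh α, trunc χ N⟫_ℂ‖ ^ 2)) atTop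
      (nhds (ENNReal.ofReal (‖⟪coh α, χ⟫_ℂ‖ ^ 2))) := by
    intro α
    have h1 : Tendsto (fun N => (⟪coh α, trunc χ N⟫_ℂ : ℂ)) atTop (nhds ⟪coh α, χ⟫_ℂ) :=
      tendsto_const_nhds.inner (tendsto_trunc χ)
    exact (ENNReal.continuous_ofReal.tendsto _).comp ((h1.norm.pow 2))
  have hmeas : ∀ N, Measurable fun α : ℂ => ENNReal.ofReal (‖⟪coh α, trunc χ N⟫_ℂ‖ ^ 2) :=
    fun N => ((meas_G coh hcoh (trunc χ N)).norm.pow_const 2).ennreal_ofReal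
  calc ∫⁻ α : ℂ, ENNReal.ofReal (‖⟪coh α, χ⟫_ℂ‖ ^ 2)
      = ∫⁻ α : ℂ, liminf (fun N => ENNReal.ofReal (‖⟪coh α, trunc χ N⟫_ℂ‖ ^ 2)) atTop := by
        exact lintegral_congr fun α => ((hpt α).liminf_eq).symm
    _ ≤ liminf (fun N => ∫⁻ α : ℂ, ENNReal.ofReal (‖⟪coh α, trunc χ N⟫_ℂ‖ ^ 2)) atTop :=
        lintegral_liminf_le hmeas
    _ = liminf (fun N => ENNReal.ofReal (π * ‖trunc χ N‖ ^ 2)) atTop := by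
        congr 1
        funext N
        rw [← ofReal_integral_eq_lintegral_ofReal (integrable_diag_trunc coh hcoh χ N)
          (ae_of_all _ fun α => by positivity), diag_trunc_eq coh hcoh χ N]
    _ = ENNReal.ofReal (π * ‖χ‖ ^ 2) := by
        apply Tendsto.liminf_eq
        have : Tendsto (fun N => π * ‖trunc χ N‖ ^ 2) atTop (nhds (π * ‖χ‖ ^ 2)) :=
          (((tendsto_trunc χ).norm.pow 2).const_mul π)
        exact (ENNReal.continuous_ofReal.tendsto _).comp this

lemma integrable_diag (χ : lp (fun _ : ℕ => ℂ) 2) :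
    Integrable (fun α : ℂ => ‖⟪coh α, χ⟫_ℂ‖ ^ 2) := by
  constructor
  · exact ((meas_G coh hcoh χ).norm.pow_const 2).aestronglyMeasurable
  · rw [hasFiniteIntegral_iff_norm]
    calc ∫⁻ α : ℂ, ENNReal.ofReal ‖‖⟪coh α, χ⟫_ℂ‖ ^ 2‖
        = ∫⁻ α : ℂ, ENNReal.ofReal (‖⟪coh α, χ⟫_ℂ‖ ^ 2) := by
          apply lintegral_congr fun α => by rw [Real.norm_of_nonneg (by positivity)]
      _ ≤ ENNReal.ofReal (π * ‖χ‖ ^ 2) := diag_lintegral_le coh hcoh χ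
      _ < ⊤ := ENNReal.ofReal_lt_top

lemma diag_integral_le (χ : lp (fun _ : ℕ => ℂ) 2) :
    ∫ α : ℂ, ‖⟪coh α, χ⟫_ℂ‖ ^ 2 ≤ π * ‖χ‖ ^ 2 := by
  rw [integral_eq_lintegral_of_nonneg_ae (ae_of_all _ fun α => by positivity)
    ((meas_G coh hcoh χ).norm.pow_const 2).aestronglyMeasurable]
  rw [← ENNReal.toReal_ofReal (show (0:ℝ) ≤ π * ‖χ‖ ^ 2 by positivity)]
  exact ENNReal.toReal_mono ENNReal.ofReal_ne_top (diag_lintegral_le coh hcoh χ)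


lemma integrable_norm_mul (χ₁ χ₂ : lp (fun _ : ℕ => ℂ) 2) :
    Integrable (fun α : ℂ => ‖⟪coh α, χ₁⟫_ℂ‖ * ‖⟪coh α, χ₂⟫_ℂ‖) := by
  refine (((integrable_diag coh hcoh χ₁).add (integrable_diag coh hcoh χ₂)).const_mul
    ((1:ℝ)/2)).mono' ?_ (ae_of_all _ fun α => ?_)
  · exact ((meas_G coh hcoh χ₁).norm.mul (meas_G coh hcoh χ₂).norm).aestronglyMeasurable
  · rw [Real.norm_of_nonneg (by positivity)]
    simp only [Pi.add_apply]
    nlinarith [sq_nonneg (‖⟪coh α, χ₁⟫_ℂ‖ - ‖⟪coh α, χ₂⟫_ℂ‖), norm_nonneg (⟪coh α, χ₁⟫_ℂ),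
      norm_nonneg (⟪coh α, χ₂⟫_ℂ)]

lemma integrable_G_mul_G (χ₁ χ₂ : lp (fun _ : ℕ => ℂ) 2) :
    Integrable (fun α : ℂ => ⟪χ₁, coh α⟫_ℂ * ⟪coh α, χ₂⟫_ℂ) := by
  refine (integrable_norm_mul coh hcoh χ₁ χ₂).mono' ?_ (ae_of_all _ fun α => ?_)
  · have h1 : Measurable fun α : ℂ => (⟪χ₁, coh α⟫_ℂ : ℂ) := by
      have : (fun α : ℂ => (⟪χ₁, coh α⟫_ℂ : ℂ))
          = fun α : ℂ => (starRingEnd ℂ) ⟪coh α, χ₁⟫_ℂ := by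
        funext α; rw [inner_conj_symm]
      rw [this]
      exact Complex.continuous_conj.measurable.comp (meas_G coh hcoh χ₁)
    exact (h1.mul (meas_G coh hcoh χ₂)).aestronglyMeasurable
  · rw [norm_mul, ← inner_conj_symm (𝕜 := ℂ) (coh α) χ₁, RCLike.norm_conj]

lemma cs_bound (χ₁ χ₂ : lp (fun _ : ℕ => ℂ) 2) :
    ∫ α : ℂ, ‖⟪coh α, χ₁⟫_ℂ‖ * ‖⟪coh α, χ₂⟫_ℂ‖ ≤ π * ‖χ₁‖ * ‖χ₂‖ := by
  have hconj : Real.HolderConjugate 2 2 := by rw [Real.holderConjugate_iff]; norm_num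
  have hm1 : MemLp (fun α : ℂ => ‖⟪coh α, χ₁⟫_ℂ‖) (ENNReal.ofReal 2) := by
    rw [show ENNReal.ofReal 2 = 2 by norm_num]
    rw [memLp_two_iff_integrable_sq (meas_G coh hcoh χ₁).norm.aestronglyMeasurable]
    exact integrable_diag coh hcoh χ₁
  have hm2 : MemLp (fun α : ℂ => ‖⟪coh α, χ₂⟫_ℂ‖) (ENNReal.ofReal 2) := by
    rw [show ENNReal.ofReal 2 = 2 by norm_num]
    rw [memLp_two_iff_integrable_sq (meas_G coh hcoh χ₂).norm.aestronglyMeasurable]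
    exact integrable_diag coh hcoh χ₂
  have h := integral_mul_le_Lp_mul_Lq_of_nonneg hconj (ae_of_all _ fun α => norm_nonneg _)
    (ae_of_all _ fun α => norm_nonneg _) hm1 hm2
  have key : (∫ α : ℂ, ‖⟪coh α, χ₁⟫_ℂ‖ ^ (2:ℝ)) ^ ((1:ℝ)/2) *
      (∫ α : ℂ, ‖⟪coh α, χ₂⟫_ℂ‖ ^ (2:ℝ)) ^ ((1:ℝ)/2) ≤ π * ‖χ₁‖ * ‖χ₂‖ := by
    have e1 : (∫ α : ℂ, ‖⟪coh α, χ₁⟫_ℂ‖ ^ (2:ℝ)) = ∫ α : ℂ, ‖⟪coh α, χ₁⟫_ℂ‖ ^ (2:ℕ) := by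
      congr 1; funext α; rw [show ((2:ℝ)) = ((2:ℕ):ℝ) by norm_num, Real.rpow_natCast]
    have e2 : (∫ α : ℂ, ‖⟪coh α, χ₂⟫_ℂ‖ ^ (2:ℝ)) = ∫ α : ℂ, ‖⟪coh α, χ₂⟫_ℂ‖ ^ (2:ℕ) := by
      congr 1; funext α; rw [show ((2:ℝ)) = ((2:ℕ):ℝ) by norm_num, Real.rpow_natCast]
    rw [e1, e2]
    have hnn1 : (0:ℝ) ≤ ∫ α : ℂ, ‖⟪coh α, χ₁⟫_ℂ‖ ^ (2:ℕ) :=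
      integral_nonneg fun α => by positivity
    have hnn2 : (0:ℝ) ≤ ∫ α : ℂ, ‖⟪coh α, χ₂⟫_ℂ‖ ^ (2:ℕ) :=
      integral_nonneg fun α => by positivity
    calc (∫ α : ℂ, ‖⟪coh α, χ₁⟫_ℂ‖ ^ (2:ℕ)) ^ ((1:ℝ)/2) *
        (∫ α : ℂ, ‖⟪coh α, χ₂⟫_ℂ‖ ^ (2:ℕ)) ^ ((1:ℝ)/2)
        ≤ (π * ‖χ₁‖ ^ 2) ^ ((1:ℝ)/2) * (π * ‖χ₂‖ ^ 2) ^ ((1:ℝ)/2) := by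
          apply mul_le_mul
          · exact Real.rpow_le_rpow hnn1 (diag_integral_le coh hcoh χ₁) (by norm_num)
          · exact Real.rpow_le_rpow hnn2 (diag_integral_le coh hcoh χ₂) (by norm_num)
          · positivity
          · positivity
      _ = π * ‖χ₁‖ * ‖χ₂‖ := by
          rw [← Real.sqrt_eq_rpow, ← Real.sqrt_eq_rpow, ← Real.sqrt_mul (by positivity),
            show π * ‖χ₁‖ ^ 2 * (π * ‖χ₂‖ ^ 2) = (π * ‖χ₁‖ * ‖χ₂‖) ^ 2 by ring,
            Real.sqrt_sq (by positivity)]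
  calc ∫ α : ℂ, ‖⟪coh α, χ₁⟫_ℂ‖ * ‖⟪coh α, χ₂⟫_ℂ‖ ≤ _ := h
    _ ≤ π * ‖χ₁‖ * ‖χ₂‖ := key


end coherent

/-- Weak resolution of the identity: for every `φ, ψ ∈ ℓ²`,
`⟨ψ, φ⟩ = (1/π) ∫_ℂ ⟨ψ|α⟩⟨α|φ⟩ d²α`. -/
theorem weak_resolution_of_identity (coh : ℂ → lp (fun _ : ℕ => ℂ) 2)
    (hcoh : ∀ (α : ℂ) (n : ℕ),
      coh α n = (Real.exp (-‖α‖ ^ 2 / 2) : ℂ) * α ^ n / (Real.sqrt n.factorial : ℂ))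
    (ψ φ : lp (fun _ : ℕ => ℂ) 2) :
    ⟪ψ, φ⟫_ℂ = (π : ℂ)⁻¹ * ∫ α : ℂ, ⟪ψ, coh α⟫_ℂ * ⟪coh α, φ⟫_ℂ := by
  have key : (π : ℂ) * ⟪ψ, φ⟫_ℂ = ∫ α : ℂ, ⟪ψ, coh α⟫_ℂ * ⟪coh α, φ⟫_ℂ := by
    have h1 : Tendsto (fun N => (π : ℂ) * ⟪trunc ψ N, trunc φ N⟫_ℂ) atTop
        (nhds ((π : ℂ) * ⟪ψ, φ⟫_ℂ)) := by
      have := ((tendsto_trunc ψ).inner (tendsto_trunc φ) : Tendsto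
        (fun N => (⟪trunc ψ N, trunc φ N⟫_ℂ : ℂ)) atTop (nhds ⟪ψ, φ⟫_ℂ))
      exact this.const_mul _
    have h2 : Tendsto (fun N => ∫ α : ℂ, ⟪trunc ψ N, coh α⟫_ℂ * ⟪coh α, trunc φ N⟫_ℂ) atTop
        (nhds (∫ α : ℂ, ⟪ψ, coh α⟫_ℂ * ⟪coh α, φ⟫_ℂ)) := by
      rw [tendsto_iff_norm_sub_tendsto_zero]
      have hbound : ∀ N, ‖(∫ α : ℂ, ⟪trunc ψ N, coh α⟫_ℂ * ⟪coh α, trunc φ N⟫_ℂ)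
          - ∫ α : ℂ, ⟪ψ, coh α⟫_ℂ * ⟪coh α, φ⟫_ℂ‖
          ≤ π * ‖trunc ψ N‖ * ‖trunc φ N - φ‖ + π * ‖trunc ψ N - ψ‖ * ‖φ‖ := by
        intro N
        rw [← integral_sub (integrable_trunc_prod coh hcoh ψ φ N) (integrable_G_mul_G coh hcoh ψ φ)]
        have hpt : ∀ α : ℂ, ‖⟪trunc ψ N, coh α⟫_ℂ * ⟪coh α, trunc φ N⟫_ℂ
            - ⟪ψ, coh α⟫_ℂ * ⟪coh α, φ⟫_ℂ‖
            ≤ ‖⟪coh α, trunc ψ N⟫_ℂ‖ * ‖⟪coh α, trunc φ N - φ⟫_ℂ‖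
              + ‖⟪coh α, trunc ψ N - ψ⟫_ℂ‖ * ‖⟪coh α, φ⟫_ℂ‖ := by
          intro α
          have e1 : (⟪trunc ψ N, coh α⟫_ℂ : ℂ) = (starRingEnd ℂ) ⟪coh α, trunc ψ N⟫_ℂ :=
            (inner_conj_symm _ _).symm
          have e2 : (⟪ψ, coh α⟫_ℂ : ℂ) = (starRingEnd ℂ) ⟪coh α, ψ⟫_ℂ :=
            (inner_conj_symm _ _).symm
          rw [e1, e2]
          calc ‖(starRingEnd ℂ) ⟪coh α, trunc ψ N⟫_ℂ * ⟪coh α, trunc φ N⟫_ℂ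
              - (starRingEnd ℂ) ⟪coh α, ψ⟫_ℂ * ⟪coh α, φ⟫_ℂ‖
              = ‖(starRingEnd ℂ) ⟪coh α, trunc ψ N⟫_ℂ * (⟪coh α, trunc φ N⟫_ℂ - ⟪coh α, φ⟫_ℂ)
                + (starRingEnd ℂ) (⟪coh α, trunc ψ N⟫_ℂ - ⟪coh α, ψ⟫_ℂ) * ⟪coh α, φ⟫_ℂ‖ := by
                congr 1
                rw [map_sub]
                ring
            _ ≤ ‖(starRingEnd ℂ) ⟪coh α, trunc ψ N⟫_ℂ * (⟪coh α, trunc φ N⟫_ℂ - ⟪coh α, φ⟫_ℂ)‖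
                + ‖(starRingEnd ℂ) (⟪coh α, trunc ψ N⟫_ℂ - ⟪coh α, ψ⟫_ℂ) * ⟪coh α, φ⟫_ℂ‖ :=
                norm_add_le _ _
            _ = ‖⟪coh α, trunc ψ N⟫_ℂ‖ * ‖⟪coh α, trunc φ N - φ⟫_ℂ‖
                + ‖⟪coh α, trunc ψ N - ψ⟫_ℂ‖ * ‖⟪coh α, φ⟫_ℂ‖ := by
                rw [norm_mul, norm_mul, RCLike.norm_conj, RCLike.norm_conj,
                  inner_sub_right, inner_sub_right]
        calc ‖∫ α : ℂ, (⟪trunc ψ N, coh α⟫_ℂ * ⟪coh α, trunc φ N⟫_ℂ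
              - ⟪ψ, coh α⟫_ℂ * ⟪coh α, φ⟫_ℂ)‖
            ≤ ∫ α : ℂ, ‖⟪trunc ψ N, coh α⟫_ℂ * ⟪coh α, trunc φ N⟫_ℂ
              - ⟪ψ, coh α⟫_ℂ * ⟪coh α, φ⟫_ℂ‖ := norm_integral_le_integral_norm _
          _ ≤ ∫ α : ℂ, (‖⟪coh α, trunc ψ N⟫_ℂ‖ * ‖⟪coh α, trunc φ N - φ⟫_ℂ‖
              + ‖⟪coh α, trunc ψ N - ψ⟫_ℂ‖ * ‖⟪coh α, φ⟫_ℂ‖) := by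
              refine integral_mono ?_ ?_ hpt
              · exact ((integrable_trunc_prod coh hcoh ψ φ N).sub
                  (integrable_G_mul_G coh hcoh ψ φ)).norm
              · exact (integrable_norm_mul coh hcoh _ _).add (integrable_norm_mul coh hcoh _ _)
          _ = (∫ α : ℂ, ‖⟪coh α, trunc ψ N⟫_ℂ‖ * ‖⟪coh α, trunc φ N - φ⟫_ℂ‖)
              + ∫ α : ℂ, ‖⟪coh α, trunc ψ N - ψ⟫_ℂ‖ * ‖⟪coh α, φ⟫_ℂ‖ :=
              integral_add (integrable_norm_mul coh hcoh _ _) (integrable_norm_mul coh hcoh _ _)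
          _ ≤ π * ‖trunc ψ N‖ * ‖trunc φ N - φ‖ + π * ‖trunc ψ N - ψ‖ * ‖φ‖ :=
              add_le_add (cs_bound coh hcoh _ _) (cs_bound coh hcoh _ _)
      have hlim : Tendsto (fun N => π * ‖trunc ψ N‖ * ‖trunc φ N - φ‖
          + π * ‖trunc ψ N - ψ‖ * ‖φ‖) atTop (nhds 0) := by
        have t1 : Tendsto (fun N => ‖trunc ψ N - ψ‖) atTop (nhds 0) := by
          have := tendsto_trunc ψ
          rw [tendsto_iff_norm_sub_tendsto_zero] at this
          exact this
        have t2 : Tendsto (fun N => ‖trunc φ N - φ‖) atTop (nhds 0) := by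
          have := tendsto_trunc φ
          rw [tendsto_iff_norm_sub_tendsto_zero] at this
          exact this
        have t3 : Tendsto (fun N => ‖trunc ψ N‖) atTop (nhds ‖ψ‖) := (tendsto_trunc ψ).norm
        have := ((t3.const_mul π).mul t2).add ((t1.const_mul π).mul
          (tendsto_const_nhds (x := ‖φ‖)))
        simpa using this
      exact squeeze_zero (fun N => norm_nonneg _) hbound hlim
    have h12 : (fun N => ∫ α : ℂ, ⟪trunc ψ N, coh α⟫_ℂ * ⟪coh α, trunc φ N⟫_ℂ)
        = fun N => (π : ℂ) * ⟪trunc ψ N, trunc φ N⟫_ℂ := by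
      funext N
      rw [trunc_integral coh hcoh ψ φ N]
    rw [h12] at h2
    exact tendsto_nhds_unique h1 h2
  rw [← key, ← mul_assoc, inv_mul_cancel₀ (Complex.ofReal_ne_zero.mpr Real.pi_ne_zero), one_mul]
end

section
/- Strong convergence of the coherent-state resolution of identity: for every φ ∈ ℓ² and every ε > 0 there exists R > 0 such that for all r ≥ R, ‖φ − (1/π) ∫_{|α|≤r} |α⟩⟨α|φ⟩ d²α‖ < ε. Hence (1/π)∫_{|α|≤r}|α⟩⟨α| d²α → I in the strong operator topology as r → ∞. -/
open MeasureTheory Real Set Filter Topology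
open scoped InnerProductSpace ENNReal



lemma coh_inner_formula (coh : ℂ → lp (fun _ : ℕ => ℂ) 2)
    (hcoh : ∀ (α : ℂ) (n : ℕ),
      coh α n = (Real.exp (-‖α‖ ^ 2 / 2) : ℂ) * α ^ n / (Real.sqrt n.factorial : ℂ))
    (α β : ℂ) :
    ⟪coh α, coh β⟫_ℂ = Complex.exp
      (Complex.ofReal (-(‖α‖ ^ 2 + ‖β‖ ^ 2) / 2) + (starRingEnd ℂ) α * β) := by
  have hexp : ∀ z : ℂ, ∑' n : ℕ, z ^ n / (n.factorial : ℂ) = Complex.exp z := fun z => by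
    rw [Complex.exp_eq_exp_ℂ, NormedSpace.exp_eq_tsum_div]
  rw [lp.inner_eq_tsum]
  have hterm : ∀ n : ℕ, ⟪coh α n, coh β n⟫_ℂ
      = ((rexp (-‖α‖ ^ 2 / 2) * rexp (-‖β‖ ^ 2 / 2) : ℝ) : ℂ)
        * (((starRingEnd ℂ) α * β) ^ n / (n.factorial : ℂ)) := by
    intro n
    rw [RCLike.inner_apply', hcoh, hcoh]
    have hs : ((Real.sqrt n.factorial : ℂ)) * (Real.sqrt n.factorial : ℂ) = (n.factorial : ℂ) := by
      rw [← Complex.ofReal_mul, Real.mul_self_sqrt (Nat.cast_nonneg _)]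
      norm_cast
    simp only [map_div₀, map_mul, map_pow, Complex.conj_ofReal]
    rw [div_mul_div_comm, hs, mul_pow]
    push_cast
    ring
  rw [tsum_congr hterm, tsum_mul_left, hexp, Complex.exp_add, ← Complex.ofReal_exp, ← Real.exp_add]
  ring_nf


lemma coh_exponent_zero (a : ℂ) :
    Complex.ofReal (-(‖a‖ ^ 2 + ‖a‖ ^ 2) / 2) + (starRingEnd ℂ) a * a = 0 := by
  have h : (starRingEnd ℂ) a * a = Complex.ofReal (‖a‖ ^ 2) := by
    rw [mul_comm, Complex.mul_conj, Complex.normSq_eq_norm_sq]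
  rw [h, ← Complex.ofReal_add]
  norm_num

lemma coh_norm_s9 (coh : ℂ → lp (fun _ : ℕ => ℂ) 2)
    (hcoh : ∀ (α : ℂ) (n : ℕ),
      coh α n = (Real.exp (-‖α‖ ^ 2 / 2) : ℂ) * α ^ n / (Real.sqrt n.factorial : ℂ))
    (α : ℂ) : ‖coh α‖ = 1 := by
  have h := coh_inner_formula coh hcoh α α
  rw [coh_exponent_zero, Complex.exp_zero, inner_self_eq_norm_sq_to_K] at h
  have h2 : ‖coh α‖ ^ 2 = 1 := by
    have h' : ((‖coh α‖ ^ 2 : ℝ) : ℂ) = ((1 : ℝ) : ℂ) := by push_cast; simpa using h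
    exact_mod_cast h'
  nlinarith [norm_nonneg (coh α)]

lemma coh_continuous (coh : ℂ → lp (fun _ : ℕ => ℂ) 2)
    (hcoh : ∀ (α : ℂ) (n : ℕ),
      coh α n = (Real.exp (-‖α‖ ^ 2 / 2) : ℂ) * α ^ n / (Real.sqrt n.factorial : ℂ)) :
    Continuous coh := by
  rw [continuous_iff_continuousAt]
  intro a
  rw [ContinuousAt, tendsto_iff_norm_sub_tendsto_zero]
  set G : ℂ → ℝ := fun β => Real.sqrt (2 - 2 * RCLike.re (Complex.exp
      (Complex.ofReal (-(‖β‖ ^ 2 + ‖a‖ ^ 2) / 2) + (starRingEnd ℂ) β * a)))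
    with hG
  have key : ∀ β : ℂ, ‖coh β - coh a‖ = G β := by
    intro β
    have h1 : ‖coh β - coh a‖ ^ 2 = 2 - 2 * RCLike.re ⟪coh β, coh a⟫_ℂ := by
      rw [@norm_sub_sq ℂ, coh_norm_s9 coh hcoh, coh_norm_s9 coh hcoh]; ring
    rw [← Real.sqrt_sq (norm_nonneg (coh β - coh a)), h1, coh_inner_formula coh hcoh]
  simp only [key]
  have hc : Continuous G := by
    apply Real.continuous_sqrt.comp
    apply continuous_const.sub
    apply continuous_const.mul
    apply RCLike.continuous_re.comp
    apply Complex.continuous_exp.comp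
    exact (Complex.continuous_ofReal.comp
        ((((continuous_norm.pow 2).add continuous_const).neg).div_const 2)).add
      (Complex.continuous_conj.mul continuous_const)
  have h0 : G a = 0 := by
    rw [hG]; simp only [coh_exponent_zero, Complex.exp_zero]
    norm_num
  exact h0 ▸ hc.tendsto a


lemma angular_integral (k : ℤ) :
    ∫ θ in Ioo (-π) π, Complex.exp (k * θ * Complex.I)
      = if k = 0 then ((2 * π : ℝ) : ℂ) else 0 := by
  have hper : -π ≤ π := by linarith [pi_pos]
  rw [← integral_Ioc_eq_integral_Ioo, ← intervalIntegral.integral_of_le hper]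
  split_ifs with hk
  · subst hk
    simp only [Int.cast_zero, zero_mul, Complex.exp_zero]
    rw [intervalIntegral.integral_const]
    rw [sub_neg_eq_add, Complex.real_smul]
    push_cast
    ring
  · have hc : ((k : ℂ) * Complex.I) ≠ 0 := by
      simp [Complex.I_ne_zero, Int.cast_ne_zero, hk]
    have : ∀ θ : ℝ, Complex.exp (k * θ * Complex.I) = Complex.exp ((k * Complex.I) * θ) := by
      intro θ; ring_nf
    simp only [this]
    rw [integral_exp_mul_complex hc]
    have hnum : Complex.exp ((k : ℂ) * Complex.I * π) = Complex.exp ((k : ℂ) * Complex.I * (-π : ℝ)) := by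
      have h1 : ((k : ℂ)) * Complex.I * (π : ℝ) = (k : ℂ) * Complex.I * ((-π : ℝ)) + k * (2 * π * Complex.I) := by
        push_cast; ring
      rw [h1, Complex.exp_add, Complex.exp_int_mul_two_pi_mul_I, mul_one]
    rw [hnum, sub_self, zero_div]


noncomputable def rhoInt (n : ℕ) (r : ℝ) : ℝ := ∫ x in Ioc (0:ℝ) r, x ^ (2*n+1) * rexp (-x^2)

lemma key_integral (m n : ℕ) (r : ℝ) :
    ∫ α in Metric.closedBall (0:ℂ) r,
        (starRingEnd ℂ) α ^ m * α ^ n * ((rexp (-‖α‖ ^ 2) : ℝ) : ℂ)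
      = if m = n then ((2 * π * rhoInt n r : ℝ) : ℂ) else 0 := by
  have step1 : (∫ α in Metric.closedBall (0:ℂ) r,
        (starRingEnd ℂ) α ^ m * α ^ n * ((rexp (-‖α‖ ^ 2) : ℝ) : ℂ))
      = ∫ p in Ioc (0:ℝ) r ×ˢ Ioo (-π) π,
          ((fun x : ℝ => ((x ^ (m + n + 1) * rexp (-x^2) : ℝ) : ℂ)) p.1)
            * ((fun θ : ℝ => Complex.exp ((((n : ℤ) - (m : ℤ) : ℤ) : ℂ) * θ * Complex.I)) p.2) := by
    rw [← integral_indicator (measurableSet_closedBall)]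
    rw [← Complex.integral_comp_polarCoord_symm
      (fun α => (Metric.closedBall (0:ℂ) r).indicator
        (fun α => (starRingEnd ℂ) α ^ m * α ^ n * ((rexp (-‖α‖ ^ 2) : ℝ) : ℂ)) α)]
    rw [← integral_indicator (measurableSet_Ioc.prod measurableSet_Ioo)]
    rw [← integral_indicator polarCoord.open_target.measurableSet]
    congr 1
    funext p
    by_cases hp : p ∈ polarCoord.target
    · have hx : 0 < p.1 := hp.1
      have habs : ‖Complex.polarCoord.symm p‖ = p.1 := by
        rw [Complex.norm_polarCoord_symm, abs_of_pos hx]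
      have hmem : Complex.polarCoord.symm p ∈ Metric.closedBall (0:ℂ) r ↔ p.1 ≤ r := by
        rw [Metric.mem_closedBall, dist_zero_right, habs]
      rw [indicator_of_mem hp]
      by_cases hpr : p.1 ≤ r
      · have hmem2 : p ∈ Ioc (0:ℝ) r ×ˢ Ioo (-π) π := ⟨⟨hx, hpr⟩, hp.2⟩
        rw [indicator_of_mem (hmem.mpr hpr), indicator_of_mem hmem2]
        have hz : Complex.polarCoord.symm p = (p.1 : ℂ) * Complex.exp (p.2 * Complex.I) := by
          rw [Complex.polarCoord_symm_apply, Complex.exp_mul_I, ← Complex.ofReal_cos,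
            ← Complex.ofReal_sin]
        have hconj : (starRingEnd ℂ) (Complex.polarCoord.symm p)
            = (p.1 : ℂ) * Complex.exp (-(p.2 * Complex.I)) := by
          rw [hz, map_mul, Complex.conj_ofReal, ← Complex.exp_conj, map_mul, Complex.conj_ofReal,
            Complex.conj_I, mul_neg]
        simp only [Complex.real_smul]
        rw [hconj, habs, hz, mul_pow, mul_pow, ← Complex.exp_nat_mul, ← Complex.exp_nat_mul]
        have hE : Complex.exp ((m:ℂ) * -((p.2:ℂ) * Complex.I))
              * Complex.exp ((n:ℂ) * ((p.2:ℂ) * Complex.I))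
            = Complex.exp ((((n : ℤ) - (m : ℤ) : ℤ) : ℂ) * (p.2:ℂ) * Complex.I) := by
          rw [← Complex.exp_add]; congr 1; push_cast; ring
        push_cast [-Complex.ofReal_exp] at hE ⊢
        linear_combination ((p.1:ℂ))^(m+n+1) * ((rexp (-p.1^2) : ℝ) : ℂ) * hE
      · rw [indicator_of_notMem (fun h => hpr (hmem.mp h)),
          indicator_of_notMem (fun h : p ∈ Ioc (0:ℝ) r ×ˢ Ioo (-π) π => hpr h.1.2)]
        simp
    · rw [indicator_of_notMem hp, indicator_of_notMem
        (fun h : p ∈ Ioc (0:ℝ) r ×ˢ Ioo (-π) π => hp ⟨h.1.1, h.2⟩)]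
  rw [step1, Measure.volume_eq_prod]
  rw [setIntegral_prod_mul (fun x : ℝ => ((x ^ (m + n + 1) * rexp (-x^2) : ℝ) : ℂ))
    (fun θ : ℝ => Complex.exp ((((n : ℤ) - (m : ℤ) : ℤ) : ℂ) * θ * Complex.I))]
  rw [angular_integral]
  have hrad : (∫ x in Ioc (0:ℝ) r, ((x ^ (m + n + 1) * rexp (-x^2) : ℝ) : ℂ))
      = ((∫ x in Ioc (0:ℝ) r, x ^ (m + n + 1) * rexp (-x^2) : ℝ) : ℂ) := by
    exact integral_ofReal
  by_cases hmn : m = n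
  · subst hmn
    rw [if_pos (by ring), if_pos rfl, hrad, rhoInt]
    have h2 : m + m + 1 = 2 * m + 1 := by ring
    rw [h2, ← Complex.ofReal_mul]
    push_cast
    ring
  · rw [if_neg (by omega), if_neg hmn, mul_zero]



noncomputable def cfun (n : ℕ) (r : ℝ) : ℝ := 2 * π * rhoInt n r / n.factorial

lemma radial_integrableOn (n : ℕ) :
    IntegrableOn (fun x : ℝ => x ^ (2*n+1) * rexp (-x^2)) (Ioi (0:ℝ)) := by
  have h := integrableOn_rpow_mul_exp_neg_mul_sq (b := 1) one_pos
    (s := (2*n+1 : ℝ)) (by have : (0:ℝ) ≤ n := Nat.cast_nonneg n; linarith)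
  have heq : (fun x : ℝ => x ^ ((2*n+1 : ℕ) : ℝ) * rexp (-1 * x ^ 2))
      = fun x : ℝ => x ^ (2*n+1) * rexp (-x^2) := by
    funext x
    rw [Real.rpow_natCast, neg_one_mul]
  have h' := h
  rw [show (2*n+1 : ℝ) = ((2*n+1 : ℕ) : ℝ) by push_cast; ring] at h'
  rw [heq] at h'
  exact h'

lemma radial_full (n : ℕ) :
    ∫ x in Ioi (0:ℝ), x ^ (2*n+1) * rexp (-x^2) = n.factorial / 2 := by
  have h := integral_rpow_mul_exp_neg_rpow (p := 2) (q := (2*n+1 : ℝ)) two_pos (by have : (0:ℝ) ≤ n := Nat.cast_nonneg n; linarith)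
  have heq : ∀ x ∈ Ioi (0:ℝ), x ^ (2*n+1 : ℝ) * rexp (-x ^ (2:ℝ))
      = x ^ (2*n+1) * rexp (-x^2) := by
    intro x hx
    rw [show (2*n+1 : ℝ) = ((2*n+1 : ℕ) : ℝ) by push_cast; ring, Real.rpow_natCast,
      show (2 : ℝ) = ((2 : ℕ) : ℝ) by norm_num, Real.rpow_natCast]
  rw [setIntegral_congr_fun measurableSet_Ioi heq] at h
  rw [h, show (2*(n:ℝ)+1+1)/2 = (n + 1 : ℝ) by ring]
  rw [show ((n:ℝ) + 1) = ((n:ℕ) + 1 : ℝ) by push_cast; ring, Real.Gamma_nat_eq_factorial]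
  ring

lemma cfun_tendsto (n : ℕ) : Tendsto (fun r => cfun n r) atTop (𝓝 π) := by
  have h1 : Tendsto (fun r : ℝ => ∫ x in (0:ℝ)..r, x ^ (2*n+1) * rexp (-x^2)) atTop
      (𝓝 (∫ x in Ioi (0:ℝ), x ^ (2*n+1) * rexp (-x^2))) :=
    intervalIntegral_tendsto_integral_Ioi 0 (radial_integrableOn n) tendsto_id
  rw [radial_full] at h1
  have h2 : (fun r : ℝ => ∫ x in (0:ℝ)..r, x ^ (2*n+1) * rexp (-x^2)) =ᶠ[atTop]
      fun r => rhoInt n r := by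
    filter_upwards [eventually_ge_atTop (0:ℝ)] with r hr
    rw [intervalIntegral.integral_of_le hr, rhoInt]
  have h3 : Tendsto (fun r => rhoInt n r) atTop (𝓝 ((n.factorial : ℝ) / 2)) := h1.congr' h2
  have h4 : Tendsto (fun r => 2 * π * rhoInt n r / n.factorial) atTop
      (𝓝 (2 * π * ((n.factorial : ℝ)/2) / n.factorial)) := (h3.const_mul _).div_const _
  have : 2 * π * ((n.factorial : ℝ)/2) / n.factorial = π := by
    field_simp
  rw [this] at h4
  exact h4

lemma rhoInt_nonneg (n : ℕ) (r : ℝ) : 0 ≤ rhoInt n r := by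
  apply setIntegral_nonneg measurableSet_Ioc
  intro x hx
  have := hx.1
  positivity

lemma cfun_nonneg (n : ℕ) (r : ℝ) : 0 ≤ cfun n r := by
  unfold cfun
  have := rhoInt_nonneg n r
  have := pi_pos
  positivity

lemma cfun_mono (n : ℕ) : Monotone (cfun n) := by
  intro r s hrs
  unfold cfun
  have hρ : rhoInt n r ≤ rhoInt n s := by
    unfold rhoInt
    apply setIntegral_mono_set
    · exact (radial_integrableOn n).mono_set Ioc_subset_Ioi_self
    · rw [EventuallyLE, ae_restrict_iff' measurableSet_Ioc]
      exact ae_of_all _ fun x hx => by have := hx.1; positivity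
    · exact HasSubset.Subset.eventuallyLE (Ioc_subset_Ioc_right hrs)
  gcongr

lemma cfun_le_pi (n : ℕ) (r : ℝ) : cfun n r ≤ π := by
  refine ge_of_tendsto (cfun_tendsto n) ?_
  filter_upwards [eventually_ge_atTop r] with s hs
  exact cfun_mono n hs



lemma summable_pow_div_sqrt_factorial {R : ℝ} (hR : 0 ≤ R) :
    Summable (fun m : ℕ => R ^ m / Real.sqrt m.factorial) := by
  apply summable_of_ratio_norm_eventually_le (r := 1/2) (by norm_num)
  filter_upwards [eventually_ge_atTop (⌈(2*R)^2⌉₊)] with m hm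
  have hfac : (0:ℝ) < Real.sqrt m.factorial := Real.sqrt_pos.mpr (by positivity)
  have hfac1 : (0:ℝ) < Real.sqrt (m+1).factorial := Real.sqrt_pos.mpr (by positivity)
  have hsq : 2 * R ≤ Real.sqrt (m+1 : ℝ) := by
    have h1 : ((2*R)^2 : ℝ) ≤ (m+1 : ℝ) := by
      have h2 : ((⌈(2*R)^2⌉₊ : ℕ) : ℝ) ≤ (m : ℝ) := by exact_mod_cast hm
      have h3 : ((2*R)^2 : ℝ) ≤ (⌈(2*R)^2⌉₊ : ℝ) := Nat.le_ceil _
      linarith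
    calc 2*R = Real.sqrt ((2*R)^2) := (Real.sqrt_sq (by positivity)).symm
    _ ≤ _ := Real.sqrt_le_sqrt h1
  have hkey : R ^ (m+1) / Real.sqrt (m+1).factorial
      ≤ 1/2 * (R ^ m / Real.sqrt m.factorial) := by
    have hfs : Real.sqrt ((m+1).factorial) = Real.sqrt (m+1 : ℝ) * Real.sqrt m.factorial := by
      rw [← Real.sqrt_mul (by positivity)]
      congr 1
      push_cast [Nat.factorial_succ]
      ring
    rw [hfs, pow_succ]
    rcases eq_or_lt_of_le hR with h0 | hRpos
    · simp only [← h0, mul_zero, zero_div]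
      positivity
    · have hsq' : (0:ℝ) < Real.sqrt (m+1 : ℝ) := by positivity
      rw [div_le_iff₀ (by positivity)]
      have : R ^ m * R = (R / Real.sqrt (m+1:ℝ)) * (R ^ m * Real.sqrt (m+1:ℝ)) := by
        field_simp
      calc R ^ m * R ≤ (1/2) * (R ^ m * Real.sqrt (m+1:ℝ)) := by
            rw [this]
            apply mul_le_mul_of_nonneg_right ?_ (by positivity)
            rw [div_le_iff₀ hsq']
            linarith
        _ = 1/2 * (R ^ m / Real.sqrt m.factorial) * (Real.sqrt (m+1:ℝ) * Real.sqrt m.factorial) := by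
            field_simp
  calc ‖R ^ (m+1) / Real.sqrt (m+1).factorial‖ = R ^ (m+1) / Real.sqrt (m+1).factorial := by
        rw [Real.norm_eq_abs, abs_of_nonneg (by positivity)]
    _ ≤ 1/2 * (R ^ m / Real.sqrt m.factorial) := hkey
    _ = 1/2 * ‖R ^ m / Real.sqrt m.factorial‖ := by
        rw [Real.norm_eq_abs, abs_of_nonneg (by positivity)]

lemma coh_coord_norm_le (coh : ℂ → lp (fun _ : ℕ => ℂ) 2)
    (hcoh : ∀ (α : ℂ) (n : ℕ),
      coh α n = (Real.exp (-‖α‖ ^ 2 / 2) : ℂ) * α ^ n / (Real.sqrt n.factorial : ℂ))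
    {R : ℝ} (n : ℕ) {α : ℂ} (hα : ‖α‖ ≤ R) :
    ‖coh α n‖ ≤ R ^ n / Real.sqrt n.factorial := by
  rw [hcoh]
  rw [norm_div, norm_mul]
  have h1 : ‖((rexp (-‖α‖ ^ 2 / 2) : ℝ) : ℂ)‖ ≤ 1 := by
    rw [Complex.norm_real, Real.norm_eq_abs, abs_of_nonneg (Real.exp_pos _).le]
    rw [Real.exp_le_one_iff]
    have := norm_nonneg α
    nlinarith
  have h2 : ‖α ^ n‖ ≤ R ^ n := by
    rw [norm_pow]
    exact pow_le_pow_left₀ (norm_nonneg α) hα n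
  have h3 : ‖((Real.sqrt n.factorial : ℝ) : ℂ)‖ = Real.sqrt n.factorial := by
    rw [Complex.norm_real, Real.norm_eq_abs, abs_of_nonneg (Real.sqrt_nonneg _)]
  rw [h3]
  have hnum : ‖((rexp (-‖α‖ ^ 2 / 2) : ℝ) : ℂ)‖ * ‖α ^ n‖ ≤ R ^ n := by
    calc ‖((rexp (-‖α‖ ^ 2 / 2) : ℝ) : ℂ)‖ * ‖α ^ n‖ ≤ 1 * (R ^ n) :=
          mul_le_mul h1 h2 (norm_nonneg _) (by norm_num)
      _ = R ^ n := one_mul _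
  gcongr

lemma coh_coord_continuous (coh : ℂ → lp (fun _ : ℕ => ℂ) 2)
    (hcoh : ∀ (α : ℂ) (n : ℕ),
      coh α n = (Real.exp (-‖α‖ ^ 2 / 2) : ℂ) * α ^ n / (Real.sqrt n.factorial : ℂ))
    (n : ℕ) : Continuous (fun α : ℂ => (coh α : ∀ _ : ℕ, ℂ) n) := by
  have : Continuous (fun α : ℂ =>
      ((rexp (-‖α‖ ^ 2 / 2) : ℝ) : ℂ) * α ^ n / ((Real.sqrt n.factorial : ℝ) : ℂ)) := by
    apply Continuous.div_const
    exact (Complex.continuous_ofReal.comp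
      (Real.continuous_exp.comp (((continuous_norm.pow 2).neg).div_const 2))).mul
      (continuous_pow n)
  exact this.congr (fun α => (hcoh α n).symm)

lemma coord_integral (coh : ℂ → lp (fun _ : ℕ => ℂ) 2)
    (hcoh : ∀ (α : ℂ) (n : ℕ),
      coh α n = (Real.exp (-‖α‖ ^ 2 / 2) : ℂ) * α ^ n / (Real.sqrt n.factorial : ℂ))
    (φ : lp (fun _ : ℕ => ℂ) 2) (n : ℕ) (r : ℝ) :
    ∫ α in Metric.closedBall (0:ℂ) r, ⟪coh α, φ⟫_ℂ * coh α n
      = ((cfun n r : ℝ) : ℂ) * φ n := by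
  classical
  set R := max r 0 with hRdef
  have hR : 0 ≤ R := le_max_right _ _
  set F : ℕ → ℂ → ℂ := fun m α => ((starRingEnd ℂ) (coh α m) * φ m) * coh α n with hF
  have hpt : ∀ α : ℂ, ⟪coh α, φ⟫_ℂ * coh α n = ∑' m, F m α := by
    intro α
    rw [lp.inner_eq_tsum]
    simp only [RCLike.inner_apply', hF]
    exact (tsum_mul_right).symm
  have hmeas : ∀ m : ℕ, AEStronglyMeasurable (F m)
      (volume.restrict (Metric.closedBall (0:ℂ) r)) := by
    intro m
    apply Continuous.aestronglyMeasurable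
    exact ((Complex.continuous_conj.comp (coh_coord_continuous coh hcoh m)).mul
      continuous_const).mul (coh_coord_continuous coh hcoh n)
  set B : ℕ → ℝ := fun m => (R ^ m / Real.sqrt m.factorial) * ‖φ‖ * (R ^ n / Real.sqrt n.factorial)
    with hB
  have hBnonneg : ∀ m, 0 ≤ B m := by
    intro m
    have : (0:ℝ) ≤ R ^ m / Real.sqrt m.factorial := by positivity
    have : (0:ℝ) ≤ R ^ n / Real.sqrt n.factorial := by positivity
    have := norm_nonneg φ
    positivity
  have hBsummable : Summable B := by
    apply Summable.mul_right
    apply Summable.mul_right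
    exact summable_pow_div_sqrt_factorial hR
  have hFb : ∀ m : ℕ, ∀ α ∈ Metric.closedBall (0:ℂ) r, ‖F m α‖ ≤ B m := by
    intro m α hα
    have hαR : ‖α‖ ≤ R := by
      rw [Metric.mem_closedBall, dist_zero_right] at hα
      exact hα.trans (le_max_left _ _)
    rw [hF]
    simp only
    rw [norm_mul, norm_mul, RingHomIsometric.norm_map]
    calc ‖coh α m‖ * ‖φ m‖ * ‖coh α n‖
        ≤ (R ^ m / Real.sqrt m.factorial) * ‖φ‖ * (R ^ n / Real.sqrt n.factorial) := by
          apply mul_le_mul ?_ (coh_coord_norm_le coh hcoh n hαR) (norm_nonneg _) ?_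
          · apply mul_le_mul (coh_coord_norm_le coh hcoh m hαR)
              (lp.norm_apply_le_norm two_ne_zero φ m) (norm_nonneg _) (by positivity)
          · have : (0:ℝ) ≤ R ^ m / Real.sqrt m.factorial := by positivity
            have := norm_nonneg φ
            positivity
      _ = B m := rfl
  have hlint : ∑' m, ∫⁻ α in Metric.closedBall (0:ℂ) r, ‖F m α‖₊ ≠ ⊤ := by
    have hone : ∀ m : ℕ, ∫⁻ α in Metric.closedBall (0:ℂ) r, ‖F m α‖₊
        ≤ ENNReal.ofReal (B m) * volume (Metric.closedBall (0:ℂ) r) := by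
      intro m
      calc ∫⁻ α in Metric.closedBall (0:ℂ) r, ‖F m α‖₊
          ≤ ∫⁻ _ in Metric.closedBall (0:ℂ) r, ENNReal.ofReal (B m) := by
            apply setLIntegral_mono' measurableSet_closedBall
            intro α hα
            rw [← enorm_eq_nnnorm, ← ofReal_norm]
            exact ENNReal.ofReal_le_ofReal (hFb m α hα)
        _ = ENNReal.ofReal (B m) * volume (Metric.closedBall (0:ℂ) r) := by
            rw [setLIntegral_const]
    apply ne_top_of_le_ne_top ?_ (ENNReal.tsum_le_tsum hone)
    rw [ENNReal.tsum_mul_right]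
    apply ENNReal.mul_ne_top
    · rw [← ENNReal.ofReal_tsum_of_nonneg hBnonneg hBsummable]
      exact ENNReal.ofReal_ne_top
    · exact (measure_closedBall_lt_top).ne
  have hswap : ∫ α in Metric.closedBall (0:ℂ) r, ⟪coh α, φ⟫_ℂ * coh α n
      = ∑' m, ∫ α in Metric.closedBall (0:ℂ) r, F m α := by
    rw [setIntegral_congr_fun measurableSet_closedBall (fun α _ => hpt α)]
    exact integral_tsum hmeas hlint
  rw [hswap]
  have hterm : ∀ m : ℕ, (∫ α in Metric.closedBall (0:ℂ) r, F m α)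
      = if m = n then ((cfun n r : ℝ) : ℂ) * φ n else 0 := by
    intro m
    have hptm : ∀ α ∈ Metric.closedBall (0:ℂ) r, F m α
        = (φ m * (((Real.sqrt m.factorial : ℝ) : ℂ) * ((Real.sqrt n.factorial : ℝ) : ℂ))⁻¹)
          * ((starRingEnd ℂ) α ^ m * α ^ n * ((rexp (-‖α‖ ^ 2) : ℝ) : ℂ)) := by
      intro α _
      rw [hF]
      simp only
      rw [hcoh, hcoh]
      simp only [map_div₀, map_mul, map_pow, Complex.conj_ofReal]
      have hee : ((rexp (-‖α‖ ^ 2 / 2) : ℝ) : ℂ)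
          * ((rexp (-‖α‖ ^ 2 / 2) : ℝ) : ℂ)
          = ((rexp (-‖α‖ ^ 2) : ℝ) : ℂ) := by
        rw [← Complex.ofReal_mul, ← Real.exp_add]
        norm_num
      have hsm : ((Real.sqrt m.factorial : ℝ) : ℂ) ≠ 0 := by
        simp only [ne_eq, Complex.ofReal_eq_zero]
        positivity
      have hsn : ((Real.sqrt n.factorial : ℝ) : ℂ) ≠ 0 := by
        simp only [ne_eq, Complex.ofReal_eq_zero]
        positivity
      rw [← hee]
      field_simp
    rw [setIntegral_congr_fun measurableSet_closedBall hptm, integral_const_mul, key_integral]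
    by_cases hmn : m = n
    · subst hmn
      rw [if_pos rfl, if_pos rfl]
      have hs : ((Real.sqrt m.factorial : ℝ) : ℂ) * ((Real.sqrt m.factorial : ℝ) : ℂ)
          = ((m.factorial : ℕ) : ℂ) := by
        rw [← Complex.ofReal_mul, Real.mul_self_sqrt (Nat.cast_nonneg _)]
        norm_cast
      rw [hs, cfun, rhoInt]
      have hfacne : ((m.factorial : ℕ) : ℂ) ≠ 0 := by
        exact_mod_cast Nat.cast_ne_zero.mpr m.factorial_ne_zero
      push_cast
      field_simp
    · rw [if_neg hmn, if_neg hmn, mul_zero]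
  rw [tsum_congr hterm, tsum_ite_eq]



set_option maxHeartbeats 1000000 in
/-- Strong convergence of the coherent-state resolution of the identity:
for every `φ ∈ ℓ²` and `ε > 0` there exists `R > 0` such that for all `r ≥ R`,
`‖φ − (1/π) ∫_{|α|≤r} |α⟩⟨α|φ⟩ d²α‖ < ε`. -/
theorem strong_resolution_of_identity (coh : ℂ → lp (fun _ : ℕ => ℂ) 2)
    (hcoh : ∀ (α : ℂ) (n : ℕ),
      coh α n = (Real.exp (-‖α‖ ^ 2 / 2) : ℂ) * α ^ n / (Real.sqrt n.factorial : ℂ))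
    (φ : lp (fun _ : ℕ => ℂ) 2) (ε : ℝ) (hε : 0 < ε) :
    ∃ R : ℝ, 0 < R ∧ ∀ r : ℝ, R ≤ r →
      ‖φ - (π : ℝ)⁻¹ • ∫ α in Metric.closedBall (0:ℂ) r, ⟪coh α, φ⟫_ℂ • coh α‖ < ε := by
  classical
  have hp2 : (0:ℝ) < (2 : ℝ≥0∞).toReal := by norm_num
  have hrpow2 : ∀ x : ℝ, 0 ≤ x → x ^ (2 : ℝ≥0∞).toReal = x ^ 2 := by
    intro x hx
    rw [show (2 : ℝ≥0∞).toReal = ((2:ℕ):ℝ) by norm_num, Real.rpow_natCast]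
  -- summability of coordinates of φ
  have hφsum : HasSum (fun n => ‖φ n‖ ^ 2) (‖φ‖ ^ 2) := by
    have h := lp.hasSum_norm hp2 φ
    simpa [hrpow2 _ (norm_nonneg _)] using h
  have hφ2 : Summable (fun n => ‖φ n‖ ^ 2) := hφsum.summable
  -- choose N for the tail
  have htail : ∀ᶠ N in atTop, ∑' k, ‖φ (k + N)‖ ^ 2 < ε ^ 2 / 4 := by
    have h0 := tendsto_sum_nat_add (fun n => ‖φ n‖ ^ 2)
    exact h0.eventually_lt_const (by positivity)
  obtain ⟨N, hN⟩ := htail.exists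
  -- choose δ
  set δ : ℝ := ε / (2 * (‖φ‖ + 1)) with hδdef
  have hδpos : 0 < δ := by
    have := norm_nonneg φ
    positivity
  -- choose R
  have hex : ∀ n : ℕ, ∃ Rn : ℝ, ∀ r : ℝ, Rn ≤ r → 1 - π⁻¹ * cfun n r < δ := by
    intro n
    have ht : Tendsto (fun r => 1 - π⁻¹ * cfun n r) atTop (𝓝 (1 - π⁻¹ * π)) :=
      tendsto_const_nhds.sub ((cfun_tendsto n).const_mul _)
    have h1 : (1 - π⁻¹ * π : ℝ) = 0 := by
      rw [inv_mul_cancel₀ pi_ne_zero, sub_self]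
    rw [h1] at ht
    have := ht.eventually_lt_const hδpos
    rw [eventually_atTop] at this
    obtain ⟨Rn, hRn⟩ := this
    exact ⟨Rn, fun r hr => hRn r hr⟩
  choose Rf hRf using hex
  set R : ℝ := 1 + ∑ n ∈ Finset.range N, |Rf n| with hRdef
  have hRpos : 0 < R := by
    have : (0:ℝ) ≤ ∑ n ∈ Finset.range N, |Rf n| :=
      Finset.sum_nonneg fun n _ => abs_nonneg _
    linarith
  refine ⟨R, hRpos, fun r hr => ?_⟩
  -- coordinates of the integral
  have hFcont : Continuous fun α : ℂ => ⟪coh α, φ⟫_ℂ • coh α :=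
    ((Continuous.inner (coh_continuous coh hcoh) continuous_const :
      Continuous fun α : ℂ => ⟪coh α, φ⟫_ℂ)).smul
      (coh_continuous coh hcoh)
  have hInt : IntegrableOn (fun α : ℂ => ⟪coh α, φ⟫_ℂ • coh α)
      (Metric.closedBall (0:ℂ) r) volume :=
    hFcont.continuousOn.integrableOn_compact (isCompact_closedBall _ _)
  set J : lp (fun _ : ℕ => ℂ) 2 := ∫ α in Metric.closedBall (0:ℂ) r, ⟪coh α, φ⟫_ℂ • coh α
    with hJdef
  have hJn : ∀ n : ℕ, (J : ∀ _ : ℕ, ℂ) n = ((cfun n r : ℝ) : ℂ) * φ n := by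
    intro n
    have h1 : (J : ∀ _ : ℕ, ℂ) n = ⟪lp.single 2 n (1:ℂ), J⟫_ℂ := by
      rw [lp.inner_single_left, RCLike.inner_apply', map_one, one_mul]
    have h2 := (innerSL ℂ (lp.single 2 n (1:ℂ))).integral_comp_comm hInt
    have h3 : ∀ α : ℂ, (innerSL ℂ (lp.single 2 n (1:ℂ))) (⟪coh α, φ⟫_ℂ • coh α)
        = ⟪coh α, φ⟫_ℂ * coh α n := by
      intro α
      rw [innerSL_apply_apply, inner_smul_right, lp.inner_single_left, RCLike.inner_apply',
        map_one, one_mul]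
    rw [h1, show ⟪lp.single 2 n (1:ℂ), J⟫_ℂ
      = (innerSL ℂ (lp.single 2 n (1:ℂ))) J from rfl, hJdef, ← h2]
    rw [integral_congr_ae (Eventually.of_forall fun α => h3 α)]
    exact coord_integral coh hcoh φ n r
  -- coordinates of the difference
  set t : ℕ → ℝ := fun n => 1 - π⁻¹ * cfun n r with htdef
  have ht0 : ∀ n, 0 ≤ t n := by
    intro n
    have h1 : π⁻¹ * cfun n r ≤ π⁻¹ * π :=
      mul_le_mul_of_nonneg_left (cfun_le_pi n r) (by positivity)
    have h2 : π⁻¹ * π = 1 := by field_simp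
    simp only [htdef]
    linarith [h1.trans_eq h2]
  have ht1 : ∀ n, t n ≤ 1 := by
    intro n
    have h1 : 0 ≤ π⁻¹ * cfun n r := mul_nonneg (by positivity) (cfun_nonneg n r)
    simp only [htdef]
    linarith
  have hΔn : ∀ n : ℕ, ((φ - (π : ℝ)⁻¹ • J : lp (fun _ : ℕ => ℂ) 2) : ∀ _ : ℕ, ℂ) n
      = ((t n : ℝ) : ℂ) * φ n := by
    intro n
    rw [lp.coeFn_sub, Pi.sub_apply, lp.coeFn_smul, Pi.smul_apply, hJn n]
    simp only [htdef]
    rw [Complex.real_smul]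
    push_cast
    ring
  set Δ := φ - (π : ℝ)⁻¹ • J with hΔdef
  have hΔsum : HasSum (fun n => t n ^ 2 * ‖φ n‖ ^ 2) (‖Δ‖ ^ 2) := by
    have h := lp.hasSum_norm hp2 Δ
    have heq : ∀ n, ‖(Δ : ∀ _ : ℕ, ℂ) n‖ ^ (2 : ℝ≥0∞).toReal = t n ^ 2 * ‖φ n‖ ^ 2 := by
      intro n
      rw [hrpow2 _ (norm_nonneg _), hΔn n, norm_mul, Complex.norm_real, Real.norm_eq_abs,
        abs_of_nonneg (ht0 n), mul_pow]
    rw [hrpow2 _ (norm_nonneg _)] at h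
    simp only [heq] at h
    exact h
  -- now bound the sum
  have hsummable := hΔsum.summable
  have hle : ‖Δ‖ ^ 2 < ε ^ 2 := by
    rw [← hΔsum.tsum_eq, (hsummable.sum_add_tsum_nat_add N).symm]
    have hhead : ∑ n ∈ Finset.range N, t n ^ 2 * ‖φ n‖ ^ 2 ≤ ε ^ 2 / 4 := by
      have hterm : ∀ n ∈ Finset.range N, t n ^ 2 * ‖φ n‖ ^ 2 ≤ δ ^ 2 * ‖φ n‖ ^ 2 := by
        intro n hn
        apply mul_le_mul_of_nonneg_right ?_ (by positivity)
        apply pow_le_pow_left₀ (ht0 n)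
        have hrRn : Rf n ≤ r := by
          have h1 : |Rf n| ≤ ∑ m ∈ Finset.range N, |Rf m| :=
            Finset.single_le_sum (f := fun m => |Rf m|) (fun m _ => abs_nonneg _) hn
          have h2 : Rf n ≤ |Rf n| := le_abs_self _
          rw [hRdef] at hr
          linarith
        exact (hRf n r hrRn).le
      calc ∑ n ∈ Finset.range N, t n ^ 2 * ‖φ n‖ ^ 2
          ≤ ∑ n ∈ Finset.range N, δ ^ 2 * ‖φ n‖ ^ 2 := Finset.sum_le_sum hterm
        _ = δ ^ 2 * ∑ n ∈ Finset.range N, ‖φ n‖ ^ 2 := by rw [Finset.mul_sum]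
        _ ≤ δ ^ 2 * ‖φ‖ ^ 2 := by
            apply mul_le_mul_of_nonneg_left ?_ (by positivity)
            rw [← hφsum.tsum_eq]
            exact Summable.sum_le_tsum (Finset.range N) (fun n _ => by positivity) hφ2
        _ ≤ ε ^ 2 / 4 := by
            rw [hδdef, div_pow]
            rw [div_mul_eq_mul_div, div_le_div_iff₀ (by positivity) (by norm_num)]
            have h1 : ‖φ‖ ^ 2 ≤ (‖φ‖ + 1) ^ 2 := by nlinarith [norm_nonneg φ]
            have h2 : (2 * (‖φ‖ + 1)) ^ 2 = 4 * (‖φ‖ + 1) ^ 2 := by ring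
            rw [h2]
            nlinarith [norm_nonneg φ, sq_nonneg ε]
    have htail2 : ∑' k, t (k + N) ^ 2 * ‖φ (k + N)‖ ^ 2 < ε ^ 2 / 4 := by
      calc ∑' k, t (k + N) ^ 2 * ‖φ (k + N)‖ ^ 2
          ≤ ∑' k, ‖φ (k + N)‖ ^ 2 := by
            apply Summable.tsum_le_tsum ?_
              ((summable_nat_add_iff (f := fun n => t n ^ 2 * ‖φ n‖ ^ 2) N).mpr hsummable)
              ((summable_nat_add_iff (f := fun n => ‖φ n‖ ^ 2) N).mpr hφ2)
            intro k
            have h1 := ht0 (k + N)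
            have h2 := ht1 (k + N)
            have ht2 : t (k + N) ^ 2 ≤ 1 := by nlinarith
            exact mul_le_of_le_one_left (by positivity) ht2
        _ < ε ^ 2 / 4 := hN
    have hε2 : 0 < ε ^ 2 := by positivity
    linarith
  have : ‖Δ‖ < ε := lt_of_pow_lt_pow_left₀ 2 hε.le hle
  exact this
end
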